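/- For all s ≥ 0 one has q'(s) ≥ -μ·s. -/

import Mathlib

open MeasureTheory Filter Real

theorem stmt_10 (a μ A : ℝ) (ha : 0 < a) (hμ : 1 / 3 < μ) (hA : 0 < A)
    (q : ℝ → ℝ) (hq : ContDiff ℝ 2 q)
    (hode : ∀ s : ℝ, deriv (deriv q) s * q s + a * s * deriv q s * q s
      + μ * q s + (1 / 3) * s * deriv q s = 0)
    (hq0 : q 0 = A) (hq0' : deriv q 0 = 0)
    (hpos : ∀ s : ℝ, 0 < q s)
    (hneg : ∀ s : ℝ, 0 < s → deriv q s < 0) :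
    ∀ s : ℝ, 0 ≤ s → deriv q s ≥ -(μ * s) := by
  have hq2 : ContDiff ℝ ((1:ℕ) + 1) q := by exact_mod_cast hq
  have hdq : Differentiable ℝ (deriv q) :=
    (contDiff_succ_iff_deriv.mp hq2).2.2.differentiable (by simp)
  have key : ∀ s : ℝ, 0 ≤ s → -μ ≤ deriv (deriv q) s := by
    intro s hs
    have h := hode s
    have hqp := hpos s
    rcases hs.eq_or_lt with rfl | hlt
    · nlinarith
    · have hn := hneg s hlt
      nlinarith [mul_pos (mul_pos ha hlt) (mul_pos (neg_pos.mpr hn) hqp)]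
  set g : ℝ → ℝ := fun s => deriv q s + μ * s with hg
  have hgd : ∀ s : ℝ, HasDerivAt g (deriv (deriv q) s + μ) s := by
    intro s
    exact ((hdq s).hasDerivAt).add (by simpa using (hasDerivAt_id s).const_mul μ)
  have hmono : MonotoneOn g (Set.Ici (0:ℝ)) := by
    apply monotoneOn_of_deriv_nonneg (convex_Ici 0)
    · exact (Continuous.continuousOn (by
        exact (hdq.continuous.add (continuous_const.mul continuous_id)) ))
    · intro s _
      exact (hgd s).differentiableAt.differentiableWithinAt
    · intro s hsmem
      rw [(hgd s).deriv]
      have hs : (0:ℝ) ≤ s := le_of_lt (by simpa using hsmem)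
      linarith [key s hs]
  intro s hs
  have := hmono Set.self_mem_Ici hs hs
  simp only [hg, hq0', mul_zero, add_zero, zero_add] at this
  linarith
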